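/- Let γ : ℤ → ℝ≥0 satisfy ∑_{j∈ℤ} √γ(j) < ∞, and let {T_j}_{j∈ℤ} be bounded operators on a Hilbert space H with ‖T_j* T_k‖ + ‖T_j T_k*‖ ≤ γ(j − k) for all j,k. Then the partial sums ∑_{|j|≤N} T_j are uniformly bounded in operator norm by ∑_{j∈ℤ} √γ(j). -/

import Mathlib

open scoped NNReal

namespace CotlarSteinAux

variable {H : Type*} [NormedAddCommGroup H] [InnerProductSpace ℂ H] [CompleteSpace H]

/-- Alternating word of operators: if `b` is true the first factor is starred. -/
noncomputable def P (T : ℤ → H →L[ℂ] H) : Bool → List ℤ → (H →L[ℂ] H)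
  | _, [] => 1
  | b, j :: l => (if b then ContinuousLinearMap.adjoint (T j) else T j) ∘L P T (!b) l

/-- Chain weight: product of `√γ` over consecutive differences. -/
noncomputable def D (γ : ℤ → ℝ≥0) : List ℤ → ℝ
  | [] => 1
  | [_] => 1
  | j :: k :: l => Real.sqrt (γ (j - k)) * D γ (k :: l)

/-- Pairing weight: product of `γ` over disjoint consecutive pairs. -/
noncomputable def E (γ : ℤ → ℝ≥0) : List ℤ → ℝ
  | [] => 1
  | [_] => Real.sqrt (γ 0)
  | j :: k :: l => (γ (j - k) : ℝ) * E γ l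

theorem D_nonneg (γ : ℤ → ℝ≥0) : ∀ l : List ℤ, 0 ≤ D γ l
  | [] => zero_le_one
  | [_] => zero_le_one
  | _ :: k :: l => mul_nonneg (Real.sqrt_nonneg _) (D_nonneg γ (k :: l))

theorem E_nonneg (γ : ℤ → ℝ≥0) : ∀ l : List ℤ, 0 ≤ E γ l
  | [] => zero_le_one
  | [_] => Real.sqrt_nonneg _
  | _ :: _ :: l => mul_nonneg (γ _).coe_nonneg (E_nonneg γ l)

theorem E_mul_E (γ : ℤ → ℝ≥0) :
    ∀ (l : List ℤ) (j : ℤ),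
      E γ (j :: l) * E γ l = Real.sqrt (γ 0) * D γ (j :: l) ^ 2
  | [], j => by simp [E, D]
  | k :: l, j => by
    have IH := E_mul_E γ l k
    show ((γ (j - k) : ℝ) * E γ l) * E γ (k :: l)
        = Real.sqrt (γ 0) * (Real.sqrt (γ (j - k)) * D γ (k :: l)) ^ 2
    have hsq : Real.sqrt (γ (j - k)) ^ 2 = (γ (j - k) : ℝ) :=
      Real.sq_sqrt (γ _).coe_nonneg
    calc ((γ (j - k) : ℝ) * E γ l) * E γ (k :: l)
        = (γ (j - k) : ℝ) * (E γ (k :: l) * E γ l) := by ring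
      _ = (γ (j - k) : ℝ) * (Real.sqrt (γ 0) * D γ (k :: l) ^ 2) := by rw [IH]
      _ = Real.sqrt (γ 0) * (Real.sqrt (γ (j - k)) * D γ (k :: l)) ^ 2 := by
          rw [mul_pow, hsq]; ring

section WordBounds

variable {T : ℤ → H →L[ℂ] H} {γ : ℤ → ℝ≥0}

theorem norm_T_le (hT : ∀ j k : ℤ,
      ‖(T j) ∘L (ContinuousLinearMap.adjoint (T k))‖
        + ‖(ContinuousLinearMap.adjoint (T j)) ∘L (T k)‖ ≤ (γ (j - k) : ℝ)) (j : ℤ) :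
    ‖T j‖ ≤ Real.sqrt (γ 0) := by
  have h := hT j j
  rw [sub_self] at h
  have h2 : ‖(ContinuousLinearMap.adjoint (T j)) ∘L (T j)‖ ≤ (γ 0 : ℝ) :=
    le_trans (le_add_of_nonneg_left (norm_nonneg _)) h
  rw [ContinuousLinearMap.norm_adjoint_comp_self] at h2
  exact Real.le_sqrt_of_sq_le (by rw [sq]; exact h2)

theorem norm_pair_le (hT : ∀ j k : ℤ,
      ‖(T j) ∘L (ContinuousLinearMap.adjoint (T k))‖
        + ‖(ContinuousLinearMap.adjoint (T j)) ∘L (T k)‖ ≤ (γ (j - k) : ℝ))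
    (b : Bool) (j k : ℤ) :
    ‖(if b then ContinuousLinearMap.adjoint (T j) else T j) ∘L
      (if !b then ContinuousLinearMap.adjoint (T k) else T k)‖ ≤ (γ (j - k) : ℝ) := by
  cases b
  · exact le_trans (le_add_of_nonneg_right (norm_nonneg _)) (hT j k)
  · exact le_trans (le_add_of_nonneg_left (norm_nonneg _)) (hT j k)

theorem norm_adjoint_eq (A : H →L[ℂ] H) : ‖ContinuousLinearMap.adjoint A‖ = ‖A‖ :=
  LinearIsometryEquiv.norm_map (ContinuousLinearMap.adjoint : (H →L[ℂ] H) ≃ₗᵢ⋆[ℂ] _) A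

theorem norm_head_le (hT : ∀ j k : ℤ,
      ‖(T j) ∘L (ContinuousLinearMap.adjoint (T k))‖
        + ‖(ContinuousLinearMap.adjoint (T j)) ∘L (T k)‖ ≤ (γ (j - k) : ℝ))
    (b : Bool) (j : ℤ) :
    ‖(if b then ContinuousLinearMap.adjoint (T j) else T j)‖ ≤ Real.sqrt (γ 0) := by
  cases b
  · simpa using norm_T_le hT j
  · simpa [norm_adjoint_eq] using norm_T_le hT j

theorem normP_le (hT : ∀ j k : ℤ,
      ‖(T j) ∘L (ContinuousLinearMap.adjoint (T k))‖
        + ‖(ContinuousLinearMap.adjoint (T j)) ∘L (T k)‖ ≤ (γ (j - k) : ℝ)) :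
    ∀ (l : List ℤ) (b : Bool), ‖P T b l‖ ≤ E γ l
  | [], b => by
    show ‖(1 : H →L[ℂ] H)‖ ≤ 1
    rw [ContinuousLinearMap.one_def]
    exact ContinuousLinearMap.norm_id_le
  | [j], b => by
    show ‖(if b then ContinuousLinearMap.adjoint (T j) else T j) ∘L (1 : H →L[ℂ] H)‖
        ≤ Real.sqrt (γ 0)
    rw [ContinuousLinearMap.one_def, ContinuousLinearMap.comp_id]
    exact norm_head_le hT b j
  | j :: k :: l, b => by
    have IH := normP_le hT l b
    have hassoc : P T b (j :: k :: l)
        = ((if b then ContinuousLinearMap.adjoint (T j) else T j) ∘L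
            (if !b then ContinuousLinearMap.adjoint (T k) else T k)) ∘L P T b l := by
      show (if b then ContinuousLinearMap.adjoint (T j) else T j) ∘L
          ((if !b then ContinuousLinearMap.adjoint (T k) else T k) ∘L P T (!!b) l) = _
      rw [Bool.not_not, ContinuousLinearMap.comp_assoc]
    rw [hassoc]
    calc ‖_ ∘L P T b l‖ ≤ ‖(if b then ContinuousLinearMap.adjoint (T j) else T j) ∘L
            (if !b then ContinuousLinearMap.adjoint (T k) else T k)‖ * ‖P T b l‖ :=
          ContinuousLinearMap.opNorm_comp_le _ _
      _ ≤ (γ (j - k) : ℝ) * E γ l :=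
          mul_le_mul (norm_pair_le hT b j k) IH (norm_nonneg _)
            (γ _).coe_nonneg
      _ = E γ (j :: k :: l) := rfl

/-- The Cotlar–Stein word estimate. -/
theorem normP_word_le (hT : ∀ j k : ℤ,
      ‖(T j) ∘L (ContinuousLinearMap.adjoint (T k))‖
        + ‖(ContinuousLinearMap.adjoint (T j)) ∘L (T k)‖ ≤ (γ (j - k) : ℝ))
    (l : List ℤ) (j : ℤ) (b : Bool) :
    ‖P T b (j :: l)‖ ≤ Real.sqrt (γ 0) * D γ (j :: l) := by
  set x := ‖P T b (j :: l)‖ with hx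
  have hx0 : 0 ≤ x := norm_nonneg _
  have h1 : x ≤ E γ (j :: l) := normP_le hT (j :: l) b
  have h2 : x ≤ Real.sqrt (γ 0) * E γ l := by
    have : P T b (j :: l)
        = (if b then ContinuousLinearMap.adjoint (T j) else T j) ∘L P T (!b) l := rfl
    rw [hx, this]
    calc ‖_ ∘L P T (!b) l‖
        ≤ ‖(if b then ContinuousLinearMap.adjoint (T j) else T j)‖ * ‖P T (!b) l‖ :=
          ContinuousLinearMap.opNorm_comp_le _ _
      _ ≤ Real.sqrt (γ 0) * E γ l :=
          mul_le_mul (norm_head_le hT b j) (normP_le hT l (!b)) (norm_nonneg _)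
            (Real.sqrt_nonneg _)
  have hsq : x ^ 2 ≤ (Real.sqrt (γ 0) * D γ (j :: l)) ^ 2 := by
    calc x ^ 2 = x * x := sq x
      _ ≤ E γ (j :: l) * (Real.sqrt (γ 0) * E γ l) :=
          mul_le_mul h1 h2 hx0 (E_nonneg γ _)
      _ = Real.sqrt (γ 0) * (E γ (j :: l) * E γ l) := by ring
      _ = Real.sqrt (γ 0) * (Real.sqrt (γ 0) * D γ (j :: l) ^ 2) := by rw [E_mul_E]
      _ = (Real.sqrt (γ 0) * D γ (j :: l)) ^ 2 := by ring
  calc x = Real.sqrt (x ^ 2) := (Real.sqrt_sq hx0).symm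
    _ ≤ Real.sqrt ((Real.sqrt (γ 0) * D γ (j :: l)) ^ 2) := Real.sqrt_le_sqrt hsq
    _ = Real.sqrt (γ 0) * D γ (j :: l) :=
        Real.sqrt_sq (mul_nonneg (Real.sqrt_nonneg _) (D_nonneg γ _))

end WordBounds

/-- Sum over all words of length `m` with letters in `F`. -/
noncomputable def sumWords (F : Finset ℤ) {M : Type*} [AddCommMonoid M] :
    ℕ → (List ℤ → M) → M
  | 0, g => g []
  | m + 1, g => ∑ j ∈ F, sumWords F m (fun l => g (j :: l))

theorem mul_sumWords (F : Finset ℤ) {M : Type*} [NonUnitalNonAssocSemiring M] (c : M) :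
    ∀ (m : ℕ) (g : List ℤ → M), c * sumWords F m g = sumWords F m (fun l => c * g l)
  | 0, g => rfl
  | m + 1, g => by
    show c * ∑ j ∈ F, sumWords F m (fun l => g (j :: l))
        = ∑ j ∈ F, sumWords F m (fun l => c * g (j :: l))
    rw [Finset.mul_sum]
    exact Finset.sum_congr rfl fun j _ => mul_sumWords F c m (fun l => g (j :: l))

theorem norm_sumWords_le (F : Finset ℤ) :
    ∀ (m : ℕ) (g : List ℤ → H →L[ℂ] H), ‖sumWords F m g‖ ≤ sumWords F m (fun l => ‖g l‖)
  | 0, g => le_refl _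
  | m + 1, g => by
    show ‖∑ j ∈ F, sumWords F m (fun l => g (j :: l))‖
        ≤ ∑ j ∈ F, sumWords F m (fun l => ‖g (j :: l)‖)
    refine le_trans (norm_sum_le _ _) (Finset.sum_le_sum fun j _ => ?_)
    exact norm_sumWords_le F m (fun l => g (j :: l))

theorem sumWords_mono (F : Finset ℤ) :
    ∀ (m : ℕ) (g h : List ℤ → ℝ), (∀ l, g l ≤ h l) → sumWords F m g ≤ sumWords F m h
  | 0, g, h, hgh => hgh []
  | m + 1, g, h, hgh => by
    show ∑ j ∈ F, sumWords F m (fun l => g (j :: l))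
        ≤ ∑ j ∈ F, sumWords F m (fun l => h (j :: l))
    exact Finset.sum_le_sum fun j _ =>
      sumWords_mono F m (fun l => g (j :: l)) (fun l => h (j :: l)) (fun l => hgh (j :: l))

theorem pow_eq_sumWords (T : ℤ → H →L[ℂ] H) (F : Finset ℤ) :
    ∀ n : ℕ,
      (∑ j ∈ F, ∑ k ∈ F, (ContinuousLinearMap.adjoint (T j)) ∘L (T k)) ^ n
        = sumWords F (2 * n) (P T true)
  | 0 => by rw [pow_zero]; rfl
  | n + 1 => by
    have h2 : 2 * (n + 1) = (2 * n) + 1 + 1 := by ring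
    rw [pow_succ', pow_eq_sumWords T F n, h2]
    show (∑ j ∈ F, ∑ k ∈ F, (ContinuousLinearMap.adjoint (T j)) ∘L (T k))
          * sumWords F (2 * n) (P T true)
        = ∑ j ∈ F, ∑ k ∈ F, sumWords F (2 * n) (fun l => P T true (j :: k :: l))
    rw [Finset.sum_mul]
    refine Finset.sum_congr rfl fun j _ => ?_
    rw [Finset.sum_mul]
    refine Finset.sum_congr rfl fun k _ => ?_
    rw [mul_sumWords]
    refine congrArg (sumWords F (2 * n)) (funext fun l => ?_)
    show ((ContinuousLinearMap.adjoint (T j)) ∘L (T k)) ∘L P T true l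
        = P T true (j :: k :: l)
    show ((ContinuousLinearMap.adjoint (T j)) ∘L (T k)) ∘L P T true l
        = (ContinuousLinearMap.adjoint (T j)) ∘L ((T k) ∘L P T (!false) l)
    rw [ContinuousLinearMap.comp_assoc]
    rfl

end CotlarSteinAux

open CotlarSteinAux in
/-- Cotlar–Knapp–Stein almost orthogonality lemma (uniform bound version):
if `‖T j * (T k)^*‖ + ‖(T j)^* * T k‖ ≤ γ (j - k)` and `∑ √(γ j) < ∞`, then the
partial sums `∑_{|j| ≤ N} T j` are uniformly bounded by `∑' j, √(γ j)`. -/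
theorem cotlar_stein_uniform_bound
    {H : Type*} [NormedAddCommGroup H] [InnerProductSpace ℂ H] [CompleteSpace H]
    (T : ℤ → H →L[ℂ] H) (γ : ℤ → ℝ≥0)
    (hsum : Summable fun j : ℤ => Real.sqrt (γ j))
    (hT : ∀ j k : ℤ,
      ‖(T j) ∘L (ContinuousLinearMap.adjoint (T k))‖
        + ‖(ContinuousLinearMap.adjoint (T j)) ∘L (T k)‖ ≤ (γ (j - k) : ℝ)) :
    ∀ N : ℕ, ‖∑ j ∈ Finset.Icc (-(N : ℤ)) (N : ℤ), T j‖ ≤ ∑' j : ℤ, Real.sqrt (γ j) := by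
  intro N
  set F : Finset ℤ := Finset.Icc (-(N : ℤ)) (N : ℤ) with hF
  set S : H →L[ℂ] H := ∑ j ∈ F, T j with hS
  set A : ℝ := ∑' j : ℤ, Real.sqrt (γ j) with hA
  have hA0 : 0 ≤ A := tsum_nonneg fun j => Real.sqrt_nonneg _
  have hγ0A : Real.sqrt (γ 0) ≤ A :=
    hsum.le_tsum 0 fun j _ => Real.sqrt_nonneg _
  -- row sums are bounded by A
  have hrow : ∀ j : ℤ, ∑ k ∈ F, Real.sqrt (γ (j - k)) ≤ A := by
    intro j
    have hinj : ∀ x ∈ F, ∀ y ∈ F, j - x = j - y → x = y := by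
      intro x _ y _ h; omega
    calc ∑ k ∈ F, Real.sqrt (γ (j - k))
        = ∑ i ∈ F.image (fun k => j - k), Real.sqrt (γ i) :=
          (Finset.sum_image (s := F) (g := fun k => j - k)
            (f := fun i => Real.sqrt (γ i)) hinj).symm
      _ ≤ A := hsum.sum_le_tsum _ (fun i _ => Real.sqrt_nonneg _)
  -- the D-sum bound
  have hDsum : ∀ (m : ℕ) (j : ℤ), sumWords F m (fun l => D γ (j :: l)) ≤ A ^ m := by
    intro m
    induction m with
    | zero => intro j; exact le_of_eq (by simp [sumWords, D])
    | succ m IH =>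
      intro j
      show ∑ k ∈ F, sumWords F m (fun l => D γ (j :: k :: l)) ≤ A ^ (m + 1)
      have step : ∀ k ∈ F, sumWords F m (fun l => D γ (j :: k :: l))
          ≤ Real.sqrt (γ (j - k)) * A ^ m := by
        intro k _
        have heq : sumWords F m (fun l => D γ (j :: k :: l))
            = Real.sqrt (γ (j - k)) * sumWords F m (fun l => D γ (k :: l)) := by
          rw [mul_sumWords]
          rfl
        rw [heq]
        exact mul_le_mul_of_nonneg_left (IH k) (Real.sqrt_nonneg _)
      calc ∑ k ∈ F, sumWords F m (fun l => D γ (j :: k :: l))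
          ≤ ∑ k ∈ F, Real.sqrt (γ (j - k)) * A ^ m := Finset.sum_le_sum step
        _ = (∑ k ∈ F, Real.sqrt (γ (j - k))) * A ^ m := by rw [Finset.sum_mul]
        _ ≤ A * A ^ m :=
            mul_le_mul_of_nonneg_right (hrow j) (pow_nonneg hA0 m)
        _ = A ^ (m + 1) := (pow_succ' A m).symm
  -- the operator B = S* S
  set B : H →L[ℂ] H := star S * S with hB
  have hBexp : ∀ n : ℕ, B ^ n = sumWords F (2 * n) (P T true) := by
    intro n
    have : B = ∑ j ∈ F, ∑ k ∈ F, (ContinuousLinearMap.adjoint (T j)) ∘L (T k) := by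
      rw [hB, hS, star_sum, Finset.sum_mul]
      refine Finset.sum_congr rfl fun j _ => ?_
      rw [Finset.mul_sum]
      rfl
    rw [this, pow_eq_sumWords]
  -- key norm bound for powers of B
  have hkey : ∀ m : ℕ, ‖B ^ (m + 1)‖ ≤ (F.card : ℝ) * (Real.sqrt (γ 0) * A ^ (2 * m + 1)) := by
    intro m
    have h2 : 2 * (m + 1) = (2 * m + 1) + 1 := by ring
    rw [hBexp (m + 1), h2]
    calc ‖sumWords F ((2 * m + 1) + 1) (P T true)‖
        = ‖∑ j ∈ F, sumWords F (2 * m + 1) (fun l => P T true (j :: l))‖ := rfl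
      _ ≤ ∑ j ∈ F, ‖sumWords F (2 * m + 1) (fun l => P T true (j :: l))‖ :=
          norm_sum_le _ _
      _ ≤ ∑ j ∈ F, (Real.sqrt (γ 0) * A ^ (2 * m + 1)) := by
          refine Finset.sum_le_sum fun j _ => ?_
          calc ‖sumWords F (2 * m + 1) (fun l => P T true (j :: l))‖
              ≤ sumWords F (2 * m + 1) (fun l => ‖P T true (j :: l)‖) :=
                norm_sumWords_le F _ _
            _ ≤ sumWords F (2 * m + 1) (fun l => Real.sqrt (γ 0) * D γ (j :: l)) :=
                sumWords_mono F _ _ _ (fun l => normP_word_le hT l j true)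
            _ = Real.sqrt (γ 0) * sumWords F (2 * m + 1) (fun l => D γ (j :: l)) :=
                (mul_sumWords F _ _ _).symm
            _ ≤ Real.sqrt (γ 0) * A ^ (2 * m + 1) :=
                mul_le_mul_of_nonneg_left (hDsum _ j) (Real.sqrt_nonneg _)
      _ = (F.card : ℝ) * (Real.sqrt (γ 0) * A ^ (2 * m + 1)) := by
          rw [Finset.sum_const, nsmul_eq_mul]
  -- norms of powers of the self-adjoint B
  have hself : IsSelfAdjoint B := IsSelfAdjoint.star_mul_self S
  have hnormB : ‖B‖ = ‖S‖ * ‖S‖ := CStarRing.norm_star_mul_self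
  have hpow : ∀ n : ℕ, ‖S‖ ^ (2 * 2 ^ n) ≤ (F.card : ℝ) * A ^ (2 * 2 ^ n) := by
    intro n
    have h1 : 1 ≤ 2 ^ n := Nat.one_le_two_pow
    have hBn : ‖B ^ 2 ^ n‖ = ‖B‖ ^ 2 ^ n := by
      have := hself.nnnorm_pow_two_pow n
      calc ‖B ^ 2 ^ n‖ = ((‖B ^ 2 ^ n‖₊ : ℝ≥0) : ℝ) := rfl
        _ = ((‖B‖₊ ^ 2 ^ n : ℝ≥0) : ℝ) := by rw [this]
        _ = ‖B‖ ^ 2 ^ n := by push_cast; rfl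
    have hSB : ‖S‖ ^ (2 * 2 ^ n) = ‖B‖ ^ 2 ^ n := by
      rw [hnormB, ← sq, ← pow_mul]
    obtain ⟨m, hm⟩ : ∃ m : ℕ, 2 ^ n = m + 1 := ⟨2 ^ n - 1, by omega⟩
    calc ‖S‖ ^ (2 * 2 ^ n) = ‖B ^ 2 ^ n‖ := by rw [hSB, hBn]
      _ ≤ (F.card : ℝ) * (Real.sqrt (γ 0) * A ^ (2 * m + 1)) := by rw [hm]; exact hkey m
      _ ≤ (F.card : ℝ) * (A * A ^ (2 * m + 1)) := by
          refine mul_le_mul_of_nonneg_left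
            (mul_le_mul_of_nonneg_right hγ0A (pow_nonneg hA0 _)) (by positivity)
      _ = (F.card : ℝ) * A ^ (2 * m + 2) := by rw [← pow_succ']
      _ = (F.card : ℝ) * A ^ (2 * 2 ^ n) := by rw [hm]; ring_nf
  -- conclude by the limiting argument
  by_contra hcon
  push_neg at hcon
  rcases eq_or_lt_of_le hA0 with hA0' | hApos
  · -- A = 0
    have h0 := hpow 0
    rw [← hA0'] at h0
    have h0' : ‖S‖ ^ 2 ≤ 0 := by simpa using h0
    have hc : (0 : ℝ) < ‖S‖ := hA0' ▸ hcon
    nlinarith [h0', hc]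
  · -- A > 0
    set r : ℝ := ‖S‖ / A with hr
    have hr1 : 1 < r := (one_lt_div hApos).mpr hcon
    have hrb : ∀ n : ℕ, r ^ (2 * 2 ^ n) ≤ (F.card : ℝ) := by
      intro n
      rw [hr, div_pow, div_le_iff₀ (by positivity)]
      exact hpow n
    obtain ⟨n, hn⟩ := pow_unbounded_of_one_lt (F.card : ℝ) hr1
    have hle : n ≤ 2 * 2 ^ n := le_trans (n.lt_two_pow_self).le (by omega)
    have : r ^ n ≤ r ^ (2 * 2 ^ n) := pow_le_pow_right₀ hr1.le hle
    exact absurd (le_trans this (hrb n)) (not_le.mpr hn)
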